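/- Let A, B, C : ℝ → ℝ be differentiable functions with A(0) = B(0) = C(0) = 0 such that (A(t+s), B(t+s), C(t+s)) = (A(t), B(t), C(t)) ⋆ (A(s), B(s), C(s)) for all t, s ∈ ℝ. Set a = A'(0), b = B'(0), c = C'(0) and suppose c ≠ 0. Then for all t ∈ ℝ: A(t) = (a/c)(1 − e^{−ct}), B(t) = (b/c)(e^{ct} − 1), and C(t) = ct. -/

import Mathlib

open Real

/-- The Sol₃ group operation on ℝ³. -/
noncomputable def sol3Mul (p q : ℝ × ℝ × ℝ) : ℝ × ℝ × ℝ :=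
  (p.1 + Real.exp (-p.2.2) * q.1, p.2.1 + Real.exp p.2.2 * q.2.1, p.2.2 + q.2.2)

theorem stmt1 (A B C : ℝ → ℝ)
    (hA : Differentiable ℝ A) (hB : Differentiable ℝ B) (hC : Differentiable ℝ C)
    (hA0 : A 0 = 0) (hB0 : B 0 = 0) (hC0 : C 0 = 0)
    (hgrp : ∀ t s : ℝ,
      ((A (t + s), B (t + s), C (t + s)) : ℝ × ℝ × ℝ) =
        sol3Mul (A t, B t, C t) (A s, B s, C s))
    (a b c : ℝ) (ha : a = deriv A 0) (hb : b = deriv B 0) (hcd : c = deriv C 0)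
    (hc : c ≠ 0) :
    ∀ t : ℝ,
      A t = a / c * (1 - Real.exp (-(c * t))) ∧
      B t = b / c * (Real.exp (c * t) - 1) ∧
      C t = c * t := by
  have hAadd : ∀ t s : ℝ, A (t + s) = A t + Real.exp (-(C t)) * A s := by
    intro t s
    have := hgrp t s
    simp [sol3Mul, Prod.ext_iff] at this
    exact this.1
  have hBadd : ∀ t s : ℝ, B (t + s) = B t + Real.exp (C t) * B s := by
    intro t s
    have := hgrp t s
    simp [sol3Mul, Prod.ext_iff] at this
    exact this.2.1
  have hCadd : ∀ t s : ℝ, C (t + s) = C t + C s := by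
    intro t s
    have := hgrp t s
    simp [sol3Mul, Prod.ext_iff] at this
    exact this.2.2
  -- derivative at 0 of s ↦ f (t + s) equals deriv f t
  have shift : ∀ (f : ℝ → ℝ), Differentiable ℝ f → ∀ t : ℝ,
      HasDerivAt (fun s => f (t + s)) (deriv f t) 0 := by
    intro f hf t
    have h1 : HasDerivAt (fun s : ℝ => t + s) 1 0 := (hasDerivAt_id 0).const_add t
    have h2 : HasDerivAt f (deriv f t) (t + 0) := by
      simpa using (hf (t + 0)).hasDerivAt
    exact (h2.comp 0 h1).congr_deriv (by simp)
  -- deriv C t = c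
  have hCder : ∀ t : ℝ, HasDerivAt C c t := by
    intro t
    have h1 := shift C hC t
    have h2 : HasDerivAt (fun s => C (t + s)) c 0 := by
      have : HasDerivAt (fun s => C t + C s) c 0 := by
        simpa [hcd] using (hC 0).hasDerivAt.const_add (C t)
      exact this.congr_of_eventuallyEq (Filter.Eventually.of_forall fun s => hCadd t s)
    have := h1.unique h2
    rw [← this]
    exact (hC t).hasDerivAt
  have hCt : ∀ t : ℝ, C t = c * t := by
    intro t
    have hdiff : Differentiable ℝ (fun t => C t - c * t) :=
      hC.sub (differentiable_id.const_mul c)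
    have hder : ∀ x : ℝ, deriv (fun t => C t - c * t) x = 0 := by
      intro x
      have h4 : HasDerivAt (fun t : ℝ => c * t) c x := by
        simpa using (hasDerivAt_id x).const_mul c
      have : HasDerivAt (fun t => C t - c * t) (c - c) x := (hCder x).sub h4
      simpa using this.deriv
    have := is_const_of_deriv_eq_zero hdiff hder t 0
    simp [hC0] at this
    linarith
  -- deriv A t = exp(-(c t)) * a
  have hAder : ∀ t : ℝ, HasDerivAt A (Real.exp (-(c * t)) * a) t := by
    intro t
    have h1 := shift A hA t
    have h2 : HasDerivAt (fun s => A (t + s)) (Real.exp (-(C t)) * a) 0 := by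
      have : HasDerivAt (fun s => A t + Real.exp (-(C t)) * A s)
          (Real.exp (-(C t)) * a) 0 := by
        simpa [ha] using (((hA 0).hasDerivAt.const_mul (Real.exp (-(C t)))).const_add (A t))
      exact this.congr_of_eventuallyEq (Filter.Eventually.of_forall fun s => hAadd t s)
    have heq := h1.unique h2
    have := (hA t).hasDerivAt
    rw [heq, hCt t] at this
    exact this
  have hBder : ∀ t : ℝ, HasDerivAt B (Real.exp (c * t) * b) t := by
    intro t
    have h1 := shift B hB t
    have h2 : HasDerivAt (fun s => B (t + s)) (Real.exp (C t) * b) 0 := by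
      have : HasDerivAt (fun s => B t + Real.exp (C t) * B s)
          (Real.exp (C t) * b) 0 := by
        simpa [hb] using (((hB 0).hasDerivAt.const_mul (Real.exp (C t))).const_add (B t))
      exact this.congr_of_eventuallyEq (Filter.Eventually.of_forall fun s => hBadd t s)
    have heq := h1.unique h2
    have := (hB t).hasDerivAt
    rw [heq, hCt t] at this
    exact this
  -- target functions and their derivatives
  have hFder : ∀ t : ℝ, HasDerivAt (fun t => a / c * (1 - Real.exp (-(c * t))))
      (Real.exp (-(c * t)) * a) t := by
    intro t
    have h1 : HasDerivAt (fun t : ℝ => -(c * t)) (-c) t := by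
      exact (((hasDerivAt_id t).const_mul c).neg).congr_deriv (by simp)
    have h2 : HasDerivAt (fun t : ℝ => Real.exp (-(c * t))) (Real.exp (-(c * t)) * (-c)) t :=
      (Real.hasDerivAt_exp _).comp t h1
    have h3 := ((h2.const_sub 1).const_mul (a / c))
    exact h3.congr_deriv (by rw [div_mul_eq_mul_div, div_eq_iff hc]; ring)
  have hGder : ∀ t : ℝ, HasDerivAt (fun t => b / c * (Real.exp (c * t) - 1))
      (Real.exp (c * t) * b) t := by
    intro t
    have h1 : HasDerivAt (fun t : ℝ => c * t) c t := by
      simpa using (hasDerivAt_id t).const_mul c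
    have h2 : HasDerivAt (fun t : ℝ => Real.exp (c * t)) (Real.exp (c * t) * c) t :=
      (Real.hasDerivAt_exp _).comp t h1
    have h3 := ((h2.sub_const 1).const_mul (b / c))
    exact h3.congr_deriv (by rw [div_mul_eq_mul_div, div_eq_iff hc]; ring)
  have hAt : ∀ t : ℝ, A t = a / c * (1 - Real.exp (-(c * t))) := by
    intro t
    have hdiff : Differentiable ℝ (fun t => A t - a / c * (1 - Real.exp (-(c * t)))) :=
      fun x => ((hAder x).sub (hFder x)).differentiableAt
    have hder : ∀ x : ℝ, deriv (fun t => A t - a / c * (1 - Real.exp (-(c * t)))) x = 0 := by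
      intro x
      have := ((hAder x).sub (hFder x)).deriv
      rw [sub_self] at this
      exact this
    have := is_const_of_deriv_eq_zero hdiff hder t 0
    simp [hA0] at this
    linarith
  have hBt : ∀ t : ℝ, B t = b / c * (Real.exp (c * t) - 1) := by
    intro t
    have hdiff : Differentiable ℝ (fun t => B t - b / c * (Real.exp (c * t) - 1)) :=
      fun x => ((hBder x).sub (hGder x)).differentiableAt
    have hder : ∀ x : ℝ, deriv (fun t => B t - b / c * (Real.exp (c * t) - 1)) x = 0 := by
      intro x
      have := ((hBder x).sub (hGder x)).deriv
      rw [sub_self] at this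
      exact this
    have := is_const_of_deriv_eq_zero hdiff hder t 0
    simp [hB0] at this
    linarith
  exact fun t => ⟨hAt t, hBt t, hCt t⟩
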